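/- If A is a retract of a topological space Y via retraction r : Y → A with inclusion i : A → Y, and a ∈ A, then the induced map i_* : π₁^top(A, a) → π₁^top(Y, a) is a topological embedding (continuous, injective, and a homeomorphism onto its image). -/

import Mathlib

open unitInterval Filter Topology

noncomputable section

/-- The `n`-th circle of the Hawaiian earring: radius `1/n`, centre `(1/n, 0)`.
(For `n = 0` this degenerates to the single point `(0,0)` since `1/0 = 0` in Lean.) -/
def circ (n : ℕ) : Set (ℝ × ℝ) :=
  {x | (x.1 - 1 / n) ^ 2 + x.2 ^ 2 = (1 / n) ^ 2}

/-- The Hawaiian earring as a subset of the plane. -/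
def HEset : Set (ℝ × ℝ) := ⋃ n : ℕ, circ n

/-- The Hawaiian earring as a topological (metric) space. -/
abbrev HE : Type := ↥HEset

lemma origin_mem_circ (n : ℕ) : ((0, 0) : ℝ × ℝ) ∈ circ n := by
  simp [circ]

/-- The basepoint `p = (0,0)` of the Hawaiian earring. -/
def hep : HE := ⟨(0, 0), Set.mem_iUnion.2 ⟨1, origin_mem_circ 1⟩⟩

/-- The point `q = (2,0)` on the largest circle `X₁`, distinct from `p`. -/
def qpt : HE := ⟨(2, 0), Set.mem_iUnion.2 ⟨1, by norm_num [circ]⟩⟩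

/-- The standard parametrisation of the `i`-th circle, starting and ending at the origin. -/
def alphaFun (i : ℕ) (t : ℝ) : ℝ × ℝ :=
  ((1 / i) * (1 - Real.cos (2 * Real.pi * t)), (1 / i) * Real.sin (2 * Real.pi * t))

lemma alphaFun_mem (i : ℕ) (t : ℝ) : alphaFun i t ∈ HEset := by
  refine Set.mem_iUnion.2 ⟨i, ?_⟩
  have h := Real.sin_sq_add_cos_sq (2 * Real.pi * t)
  simp only [circ, alphaFun, Set.mem_setOf_eq]
  nlinarith [h]

/-- The loop `αᵢ` traversing the `i`-th circle of the Hawaiian earring once. -/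
def alpha (i : ℕ) : Path hep hep where
  toFun t := ⟨alphaFun i t, alphaFun_mem i t⟩
  continuous_toFun := by
    refine Continuous.subtype_mk ?_ _
    unfold alphaFun
    fun_prop
  source' := by
    ext : 1
    simp [alphaFun, hep]
  target' := by
    ext : 1
    simp [alphaFun, hep, Real.cos_two_pi, Real.sin_two_pi]

/-- `n`-fold concatenation of a loop with itself. -/
def loopPow {X : Type*} [TopologicalSpace X] {p : X} (γ : Path p p) : ℕ → Path p p
  | 0 => Path.refl p
  | n + 1 => (loopPow γ n).trans γ

/-- The commutator-power loops `fₙ = (α₁ * α_m * α₁⁻¹ * α_m⁻¹)ⁿ`. -/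
def fLoop (m n : ℕ) : Path hep hep :=
  loopPow ((((alpha 1).trans (alpha m)).trans (alpha 1).symm).trans (alpha m).symm) n

/-- `oscGE q g M` : there are `t₀ < t₁ < ⋯ < t_M` in `[0,1]` with `g(t_{2i}) = p`
and `g(t_{2i+1}) = q`. -/
def oscGE (q : HE) (g : I → HE) (M : ℕ) : Prop :=
  ∃ t : Fin (M + 1) → I, StrictMono t ∧ ∀ i : Fin (M + 1),
    ((i : ℕ) % 2 = 0 → g (t i) = hep) ∧ ((i : ℕ) % 2 = 1 → g (t i) = q)

/-- The oscillation number of a based loop, an element of `ℕ ∪ {∞}`. -/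
def osc (q : HE) (g : I → HE) : ℕ∞ :=
  ⨆ (M : ℕ) (_ : oscGE q g M), (M : ℕ∞)

/-- The topological fundamental group: path components of the based loop space
(with the uniform-convergence = compact-open topology), with the quotient topology. -/
def Pi1Top (X : Type*) [TopologicalSpace X] (p : X) : Type _ :=
  Quotient (pathSetoid (Path p p))

instance (X : Type*) [TopologicalSpace X] (p : X) : TopologicalSpace (Pi1Top X p) :=
  instTopologicalSpaceQuotient

/-- The canonical surjection `Π : C_p(X) → π₁^top(X,p)`. -/
def Pr {X : Type*} [TopologicalSpace X] {p : X} (γ : Path p p) : Pi1Top X p :=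
  Quotient.mk _ γ


lemma continuous_pathMap {X Y : Type*} [TopologicalSpace X] [TopologicalSpace Y]
    {x y : X} {f : X → Y} (hf : Continuous f) :
    Continuous fun γ : Path x y => γ.map hf := by
  rw [continuous_induced_rng]
  exact (ContinuousMap.continuous_postcomp ⟨f, hf⟩).comp continuous_induced_dom

/-- The map `i_* : π₁^top(A, a) → π₁^top(Y, a)` induced by the inclusion `A ⊆ Y`. -/
def indMap {Y : Type*} [TopologicalSpace Y] (A : Set Y) (a : A) :
    Pi1Top ↥A a → Pi1Top Y (a : Y) :=
  Quotient.map (fun γ : Path a a => γ.map continuous_subtype_val)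
    (fun γ δ h => by
      obtain ⟨sp⟩ := h
      exact ⟨sp.map (continuous_pathMap continuous_subtype_val)⟩)

lemma continuous_pathCast {X : Type*} [TopologicalSpace X] {x y x' y' : X}
    (hx : x' = x) (hy : y' = y) :
    Continuous fun γ : Path x y => γ.cast hx hy := by
  rw [continuous_induced_rng]
  convert (continuous_induced_dom (α := Path x y) (β := C(I, X))) using 1
  exact rfl

theorem stmt16 {Y : Type*} [TopologicalSpace Y] (A : Set Y) (r : Y → A)
    (hr : Continuous r) (hret : ∀ b : A, r (b : Y) = b) (a : A) :
    IsEmbedding (indMap A a) := by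
  set rMap : Path (a : Y) (a : Y) → Path a a :=
    fun γ => (γ.map hr).cast (hret a).symm (hret a).symm with hrMap
  have hrc : Continuous rMap :=
    (continuous_pathCast (hret a).symm (hret a).symm).comp (continuous_pathMap hr)
  set rInd : Pi1Top Y (a : Y) → Pi1Top ↥A a :=
    Quotient.map rMap (fun γ δ h => by
      obtain ⟨sp⟩ := h
      exact ⟨sp.map hrc⟩) with hrInd
  have hrIndCont : Continuous rInd := hrc.quotient_map' _
  have hindCont : Continuous (indMap A a) :=
    (continuous_pathMap continuous_subtype_val).quotient_map' _
  have hleft : Function.LeftInverse rInd (indMap A a) := by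
    intro x
    induction x using Quotient.ind with
    | _ γ =>
      show Quotient.mk _ (rMap (γ.map continuous_subtype_val)) = Quotient.mk _ γ
      congr 1
      ext t
      simp [hrMap, hret (γ t)]
  exact hleft.isEmbedding hrIndCont hindCont

end
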